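/- For every graph G and all positive integers n, r, k, one has σ(Gⁿ, r, k) ≤ σ(G, r, k), where Gⁿ is the n-th power of G. -/

import Mathlib

/-- One simultaneous move in the game: each agent stays put or moves along an edge. -/
def RSMove {V : Type*} (G : SimpleGraph V) {ι : Type*} (p q : ι → V) : Prop :=
  ∀ i, q i = p i ∨ G.Adj (p i) (q i)

/-- The spies have a winning strategy in 𝒢(G,r,s,k): there is a causal function `f`
(depending only on the history so far) producing the spies' positions at the end of each
round from the revolutionaries' positions up to that round (the revolutionaries
place/move first in each round), such that against every legal play of the
revolutionaries the spies' play is legal and, at the end of every round, each vertex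
holding at least `k` revolutionaries is occupied by a spy. -/
def SpiesWin {V : Type*} (G : SimpleGraph V) (r s k : ℕ) : Prop :=
  ∃ f : (ℕ → Fin r → V) → ℕ → Fin s → V,
    (∀ R R' n, (∀ m, m ≤ n → R m = R' m) → f R n = f R' n) ∧
    ∀ R : ℕ → Fin r → V, (∀ n, RSMove G (R n) (R (n + 1))) →
      (∀ n, RSMove G (f R n) (f R (n + 1))) ∧
      (∀ n v, k ≤ Set.ncard {i | R n i = v} → ∃ j, f R n j = v)

/-- σ(G, r, k): the minimum number of spies needed to win 𝒢(G,r,s,k). -/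
noncomputable def spySigma {V : Type*} (G : SimpleGraph V) (r k : ℕ) : ℕ :=
  sInf {s | SpiesWin G r s k}

/-- The n-th power of a graph: distinct vertices adjacent iff their distance in `G`
is at most `n` (i.e. they are joined by a walk of length at most `n`). -/
def graphPow {V : Type*} (G : SimpleGraph V) (n : ℕ) : SimpleGraph V where
  Adj v w := v ≠ w ∧ ∃ p : G.Walk v w, p.length ≤ n
  symm := by
    constructor
    rintro v w ⟨h, p, hp⟩
    exact ⟨h.symm, p.reverse, by simpa using hp⟩
  loopless := by constructor; intro v h; exact h.1 rfl

open SimpleGraph in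
lemma getVert_step' {V : Type*} {G : SimpleGraph V} {u v : V} (p : G.Walk u v) (j : ℕ) :
    p.getVert (j + 1) = p.getVert j ∨ G.Adj (p.getVert j) (p.getVert (j + 1)) := by
  rcases lt_or_ge j p.length with h | h
  · exact Or.inr (p.adj_getVert_succ h)
  · left
    rw [p.getVert_of_length_le h, p.getVert_of_length_le (le_trans h (Nat.le_succ j))]

open SimpleGraph in
lemma walk_of_chain' {V : Type*} {G : SimpleGraph V} (g : ℕ → V)
    (h : ∀ m, g (m + 1) = g m ∨ G.Adj (g m) (g (m + 1))) (j : ℕ) :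
    ∃ p : G.Walk (g 0) (g j), p.length ≤ j := by
  induction j with
  | zero => exact ⟨SimpleGraph.Walk.nil, le_refl 0⟩
  | succ j ih =>
    obtain ⟨p, hp⟩ := ih
    rcases h j with he | ha
    · exact ⟨p.copy rfl he.symm, by simpa using hp.trans (Nat.le_succ j)⟩
    · exact ⟨p.concat ha, by simpa [SimpleGraph.Walk.length_concat] using hp⟩

open Classical in
/-- Interpolation along some walk of length at most `n` from `u` to `v`. -/
noncomputable def interpW {V : Type*} (G : SimpleGraph V) (n : ℕ) (u v : V) (j : ℕ) : V :=
  if h : ∃ p : G.Walk u v, p.length ≤ n then h.choose.getVert j else u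

lemma interpW_zero {V : Type*} (G : SimpleGraph V) (n : ℕ) (u v : V) :
    interpW G n u v 0 = u := by
  by_cases h : ∃ p : G.Walk u v, p.length ≤ n
  · simp only [interpW, dif_pos h]
    exact SimpleGraph.Walk.getVert_zero _
  · simp only [interpW, dif_neg h]

lemma interpW_last {V : Type*} (G : SimpleGraph V) (n : ℕ) {u v : V}
    (h : ∃ p : G.Walk u v, p.length ≤ n) : interpW G n u v n = v := by
  simp only [interpW, dif_pos h]
  exact SimpleGraph.Walk.getVert_of_length_le _ h.choose_spec

lemma interpW_step {V : Type*} (G : SimpleGraph V) (n : ℕ) {u v : V}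
    (h : ∃ p : G.Walk u v, p.length ≤ n) (j : ℕ) :
    interpW G n u v (j + 1) = interpW G n u v j ∨
      G.Adj (interpW G n u v j) (interpW G n u v (j + 1)) := by
  simp only [interpW, dif_pos h]
  exact getVert_step' h.choose j

lemma spiesWin_pow {V : Type*} (G : SimpleGraph V) (n r s k : ℕ) (hn : 0 < n)
    (h : SpiesWin G r s k) : SpiesWin (graphPow G n) r s k := by
  obtain ⟨f, hcaus, hf⟩ := h
  -- expansion of a play on `graphPow G n` into a play on `G`
  set E : (ℕ → Fin r → V) → ℕ → Fin r → V :=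
    fun R m i => interpW G n (R (m / n) i) (R (m / n + 1) i) (m % n) with hE
  have hE0 : ∀ R : ℕ → Fin r → V, ∀ t i, E R (n * t) i = R t i := by
    intro R t i
    simp only [hE, Nat.mul_div_cancel_left _ hn, Nat.mul_mod_right, interpW_zero]
  refine ⟨fun R t => f (E R) (n * t), ?_, ?_⟩
  · -- causality
    intro R R' t hRR
    apply hcaus
    intro m hm
    rcases eq_or_lt_of_le hm with heq | hlt
    · funext i
      rw [heq, hE0, hE0, hRR t le_rfl]
    · have hq : m / n < t := (Nat.div_lt_iff_lt_mul hn).mpr (Nat.mul_comm n t ▸ hlt)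
      funext i
      simp only [hE]
      rw [hRR (m / n) (by omega), hRR (m / n + 1) (by omega)]
  · intro R hR
    have hW : ∀ q i, ∃ p : G.Walk (R q i) (R (q + 1) i), p.length ≤ n := by
      intro q i
      rcases hR q i with he | ha
      · exact ⟨SimpleGraph.Walk.nil.copy rfl he.symm, by simp⟩
      · exact ha.2
    have hlegal : ∀ m, RSMove G (E R m) (E R (m + 1)) := by
      intro m i
      have hmod : m % n < n := Nat.mod_lt _ hn
      have hdm : n * (m / n) + m % n = m := Nat.div_add_mod m n
      have hms : n * (m / n + 1) = n * (m / n) + n := Nat.mul_succ n (m / n)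
      by_cases hjn : m % n + 1 = n
      · -- wrap-around step
        have hm1 : m + 1 = n * (m / n + 1) := by omega
        have h1 : E R (m + 1) i = R (m / n + 1) i := by rw [hm1]; exact hE0 R _ i
        have h2 := interpW_step G n (hW (m / n) i) (m % n)
        rw [hjn, interpW_last G n (hW (m / n) i)] at h2
        rw [h1]
        exact h2
      · have hm1 : m + 1 = n * (m / n) + (m % n + 1) := by omega
        have hd0 : (m % n + 1) / n = 0 := Nat.div_eq_of_lt (by omega)
        have h1 : (m + 1) / n = m / n := by
          rw [hm1, Nat.mul_add_div hn, hd0, Nat.add_zero]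
        have h2 : (m + 1) % n = m % n + 1 := by
          rw [hm1, Nat.mul_add_mod]
          exact Nat.mod_eq_of_lt (by omega)
        show E R (m + 1) i = E R m i ∨ G.Adj (E R m i) (E R (m + 1) i)
        simp only [hE, h1, h2]
        exact interpW_step G n (hW (m / n) i) (m % n)
    obtain ⟨hspy, hcover⟩ := hf (E R) hlegal
    constructor
    · -- spies' moves are legal in the power graph
      intro t j
      set g : ℕ → V := fun m => f (E R) (n * t + m) j with hg
      have hsteps : ∀ m, g (m + 1) = g m ∨ G.Adj (g m) (g (m + 1)) := by
        intro m
        have := hspy (n * t + m) j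
        simpa [hg, Nat.add_assoc] using this
      obtain ⟨p, hp⟩ := walk_of_chain' g hsteps n
      have hg0 : g 0 = f (E R) (n * t) j := by simp [hg]
      have hgn : g n = f (E R) (n * (t + 1)) j := by
        simp [hg, Nat.mul_succ]
      by_cases heq : f (E R) (n * (t + 1)) j = f (E R) (n * t) j
      · exact Or.inl heq
      · refine Or.inr ⟨fun hc => heq hc.symm, ?_⟩
        exact ⟨(p.copy hg0 hgn), by simpa using hp⟩
    · -- coverage
      intro t v hv
      have hset : {i | E R (n * t) i = v} = {i | R t i = v} := by
        ext i; simp [hE0]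
      refine hcover (n * t) v ?_
      rw [hset]
      exact hv

lemma spiesWin_mirror {V : Type*} (G : SimpleGraph V) (r k : ℕ) (hk : 0 < k) :
    SpiesWin G r r k := by
  refine ⟨fun R t => R t, fun R R' t h => h t le_rfl, fun R hR => ⟨hR, ?_⟩⟩
  intro t v hv
  rcases Set.eq_empty_or_nonempty {i | R t i = v} with he | hne
  · rw [he, Set.ncard_empty] at hv; omega
  · obtain ⟨i, hi⟩ := hne
    exact ⟨i, hi⟩

theorem stmt_10 {V : Type*} (G : SimpleGraph V) (n r k : ℕ) (hn : 0 < n) (hr : 0 < r)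
    (hk : 0 < k) : spySigma (graphPow G n) r k ≤ spySigma G r k := by
  have hne : {s | SpiesWin G r s k}.Nonempty := ⟨r, spiesWin_mirror G r k hk⟩
  have hmem : SpiesWin G r (spySigma G r k) k := Nat.sInf_mem hne
  exact Nat.sInf_le (spiesWin_pow G n r _ k hn hmem)
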